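/- Let V be a finite set and for each s ∈ V let W_s be an n×n real symmetric positive semidefinite matrix. For S ⊆ V define W_S = Σ_{s∈S} W_s. Then the set function f : 2^V → ℝ defined by f(S) = rank(W_S) is submodular and monotone increasing. -/

import Mathlib

open Matrix Module

section Aux

variable {n : ℕ}

private lemma aux_range_eq_orth_ker {T : EuclideanSpace ℝ (Fin n) →ₗ[ℝ] EuclideanSpace ℝ (Fin n)}
    (hT : T.IsSymmetric) : LinearMap.range T = (LinearMap.ker T)ᗮ := by
  apply Submodule.eq_of_le_of_finrank_le
  · rintro _ ⟨x, rfl⟩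
    rw [Submodule.mem_orthogonal]
    intro u hu
    have h := (hT u x).symm
    rwa [LinearMap.mem_ker.mp hu, inner_zero_left] at h
  · have h1 := Submodule.finrank_add_finrank_orthogonal (K := LinearMap.ker T)
    have h2 := LinearMap.finrank_range_add_finrank_ker T
    omega

private lemma aux_toEuclideanLin_eq_zero_iff (M : Matrix (Fin n) (Fin n) ℝ)
    (x : EuclideanSpace ℝ (Fin n)) :
    M.toEuclideanLin x = 0 ↔ M *ᵥ (WithLp.equiv 2 (Fin n → ℝ)) x = 0 := by
  rw [toEuclideanLin_apply]
  constructor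
  · intro h
    simpa using congrArg (WithLp.equiv 2 (Fin n → ℝ)) h
  · intro h
    rw [show x.ofLp = (WithLp.equiv 2 (Fin n → ℝ)) x from rfl, h]
    simp

private lemma aux_ker_add {A B : Matrix (Fin n) (Fin n) ℝ} (hA : A.PosSemidef)
    (hB : B.PosSemidef) :
    LinearMap.ker (A + B).toEuclideanLin =
      LinearMap.ker A.toEuclideanLin ⊓ LinearMap.ker B.toEuclideanLin := by
  ext x
  simp only [Submodule.mem_inf, LinearMap.mem_ker, aux_toEuclideanLin_eq_zero_iff]
  set y := (WithLp.equiv 2 (Fin n → ℝ)) x with hy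
  constructor
  · intro h
    have hab : star y ⬝ᵥ (A + B) *ᵥ y = 0 := by rw [h, dotProduct_zero]
    rw [add_mulVec, dotProduct_add] at hab
    have ha := hA.dotProduct_mulVec_nonneg y
    have hb := hB.dotProduct_mulVec_nonneg y
    constructor
    · exact (hA.dotProduct_mulVec_zero_iff y).mp (by linarith)
    · exact (hB.dotProduct_mulVec_zero_iff y).mp (by linarith)
  · rintro ⟨h1, h2⟩
    rw [add_mulVec, h1, h2, add_zero]

private lemma aux_range_add {A B : Matrix (Fin n) (Fin n) ℝ} (hA : A.PosSemidef)
    (hB : B.PosSemidef) :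
    LinearMap.range (A + B).toEuclideanLin =
      LinearMap.range A.toEuclideanLin ⊔ LinearMap.range B.toEuclideanLin := by
  rw [aux_range_eq_orth_ker (Matrix.isHermitian_iff_isSymmetric.mp hA.1),
    aux_range_eq_orth_ker (Matrix.isHermitian_iff_isSymmetric.mp hB.1),
    aux_range_eq_orth_ker (Matrix.isHermitian_iff_isSymmetric.mp (hA.add hB).1),
    aux_ker_add hA hB]
  rw [← Submodule.orthogonal_orthogonal
      ((LinearMap.ker A.toEuclideanLin)ᗮ ⊔ (LinearMap.ker B.toEuclideanLin)ᗮ),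
    ← Submodule.inf_orthogonal, Submodule.orthogonal_orthogonal (LinearMap.ker A.toEuclideanLin),
    Submodule.orthogonal_orthogonal (LinearMap.ker B.toEuclideanLin)]

private lemma aux_rank_eq (M : Matrix (Fin n) (Fin n) ℝ) :
    M.rank = finrank ℝ (LinearMap.range M.toEuclideanLin) := by
  rw [toEuclideanLin_eq_toLin_orthonormal]
  exact M.rank_eq_finrank_range_toLin _ _

end Aux

/-- The rank of the controllability Gramian `W_S = ∑_{s ∈ S} W_s` is a submodular and
monotone increasing set function of the actuator set `S`. -/
theorem rank_gramian_submodular_monotone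
    {V : Type*} [Fintype V] [DecidableEq V] {n : ℕ}
    (W : V → Matrix (Fin n) (Fin n) ℝ) (hW : ∀ s : V, (W s).PosSemidef)
    (f : Finset V → ℝ)
    (hf : ∀ S : Finset V, f S = ((∑ s ∈ S, W s).rank : ℝ)) :
    (∀ A B : Finset V, A ⊆ B → ∀ s : V, s ∉ B →
      f (insert s A) - f A ≥ f (insert s B) - f B) ∧
    (∀ A B : Finset V, A ⊆ B → f A ≤ f B) := by
  set R : V → Submodule ℝ (EuclideanSpace ℝ (Fin n)) :=
    fun s => LinearMap.range (W s).toEuclideanLin with hR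
  have hPSD : ∀ S : Finset V, (∑ s ∈ S, W s).PosSemidef := by
    intro S
    induction S using Finset.induction_on with
    | empty => simpa using Matrix.PosSemidef.zero
    | insert _ _ hs ih => rw [Finset.sum_insert hs]; exact (hW _).add ih
  have hsum : ∀ S : Finset V,
      LinearMap.range (∑ s ∈ S, W s).toEuclideanLin = ⨆ s ∈ S, R s := by
    intro S
    induction S using Finset.induction_on with
    | empty => simp [Finset.sum_empty]
    | insert _ _ hs ih =>
        rw [Finset.sum_insert hs, aux_range_add (hW _) (hPSD _), ih, Finset.iSup_insert]
  have hfr : ∀ S : Finset V, f S = (finrank ℝ ↥(⨆ s ∈ S, R s) : ℝ) := by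
    intro S
    rw [hf, aux_rank_eq, hsum]
  have hmono : ∀ A B : Finset V, A ⊆ B →
      (⨆ s ∈ A, R s) ≤ ⨆ s ∈ B, R s := by
    intro A B hAB
    exact biSup_mono hAB
  constructor
  · intro A B hAB s hsB
    rw [hfr, hfr, hfr, hfr, Finset.iSup_insert, Finset.iSup_insert]
    set X := R s
    set UA := ⨆ t ∈ A, R t
    set UB := ⨆ t ∈ B, R t
    have h1 := congrArg (Nat.cast : ℕ → ℝ) (Submodule.finrank_sup_add_finrank_inf_eq X UA)
    have h2 := congrArg (Nat.cast : ℕ → ℝ) (Submodule.finrank_sup_add_finrank_inf_eq X UB)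
    have h3 : (finrank ℝ ↥(X ⊓ UA) : ℝ) ≤ (finrank ℝ ↥(X ⊓ UB) : ℝ) :=
      Nat.cast_le.mpr (Submodule.finrank_mono (inf_le_inf_left X (hmono A B hAB)))
    push_cast at h1 h2
    linarith
  · intro A B hAB
    rw [hfr, hfr]
    exact_mod_cast Submodule.finrank_mono (hmono A B hAB)
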